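/- arXiv:1511.03705 — 3 statements merged into one kernel-verified Lean document; each statement's English description precedes it below -/
import Mathlib

section
/- Let c₀ > 0, c₁ > 0, σ > 0 be real constants, and let x, y, z be real numbers with 0 < x < y and 0 ≤ z ≤ c₀. Then the per-relay jamming power constraint z ≤ c₀·(1 − y·(c₁·x + σ²·y)/(y − x))·(1 − x/y) holds if and only if the second-order cone constraint √((2σ·y)² + 4·(1 − z/c₀)/c₁ + ((1 − z/c₀ − c₁·x) − (y + 1/c₁))²) ≤ (1 − z/c₀ − c₁·x) + (y + 1/c₁) holds. -/
set_option maxHeartbeats 1000000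


/-- Per-relay jamming power constraint ↔ second-order cone constraint. -/
theorem stmt_3 (x y z c₀ c₁ σ : ℝ) (hc₀ : 0 < c₀) (hc₁ : 0 < c₁) (hσ : 0 < σ)
    (hx : 0 < x) (hxy : x < y) (hz : 0 ≤ z) (hzc : z ≤ c₀) :
    z ≤ c₀ * ((1 - y * (c₁ * x + σ ^ 2 * y) / (y - x)) * (1 - x / y)) ↔
      Real.sqrt ((2 * σ * y) ^ 2 + 4 * (1 - z / c₀) / c₁
          + ((1 - z / c₀ - c₁ * x) - (y + 1 / c₁)) ^ 2)
        ≤ (1 - z / c₀ - c₁ * x) + (y + 1 / c₁) := by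
  have hy : 0 < y := hx.trans hxy
  have hyx : 0 < y - x := by linarith
  have h1 : c₀ * ((1 - y * (c₁ * x + σ ^ 2 * y) / (y - x)) * (1 - x / y))
      = c₀ * (1 - x / y - c₁ * x - σ ^ 2 * y) := by
    have : (1 - y * (c₁ * x + σ ^ 2 * y) / (y - x)) * (1 - x / y)
        = 1 - x / y - c₁ * x - σ ^ 2 * y := by
      field_simp
      ring
    rw [this]
  rw [h1, Real.sqrt_le_iff, div_eq_mul_inv (4 * (1 - z / c₀)) c₁]
  set w := z / c₀ with hw
  have hw0 : 0 ≤ w := div_nonneg hz hc₀.le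
  have hw1 : w ≤ 1 := (div_le_one hc₀).2 hzc
  have hz' : z = c₀ * w := by rw [hw]; field_simp
  set a := c₁⁻¹ with hainv
  have ha : c₁ * a = 1 := mul_inv_cancel₀ hc₁.ne'
  have ha0 : 0 < a := inv_pos.2 hc₁
  set b := x / y with hb
  have hby : y * b = x := by rw [hb]; field_simp
  have hb0 : 0 < b := div_pos hx hy
  have hone : 1 / c₁ = a := by rw [hainv, one_div]
  rw [hone]
  constructor
  · intro h
    have hkey : w + b + c₁ * x + σ ^ 2 * y ≤ 1 := by
      rw [hz'] at h
      nlinarith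
    have hkey2 : (1 - w) * y ≥ x + c₁ * x * y + σ ^ 2 * y ^ 2 := by
      nlinarith [mul_le_mul_of_nonneg_right hkey hy.le]
    constructor
    · nlinarith [sq_nonneg σ, mul_pos hσ hy, mul_pos (mul_pos hσ hσ) hy]
    · nlinarith
  · rintro ⟨h1, h2⟩
    have hxa : c₁ * x * a = x := by rw [hainv]; field_simp
    have hkey2 : x + c₁ * x * y + σ ^ 2 * y ^ 2 ≤ (1 - w) * y := by
      nlinarith [h1, hxa]
    have hkey : w + b + c₁ * x + σ ^ 2 * y ≤ 1 := by
      have := mul_le_mul_of_nonneg_right hkey2 (le_of_lt (inv_pos.2 hy))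
      have hyi : y * y⁻¹ = 1 := mul_inv_cancel₀ hy.ne'
      have hbi : b = x * y⁻¹ := by rw [hb, div_eq_mul_inv]
      nlinarith
    rw [hz']
    nlinarith
end

section
/- Let N ≥ 1, let M be an N×N Hermitian positive definite complex matrix, let a ∈ ℂ^N, let c > 0 be real, and set Y = M − c·a·aᴴ. If X is an N×N Hermitian positive semidefinite complex matrix with X ≠ 0 and Y·X = 0, then X = c·M⁻¹·a·aᴴ·X and rank(X) = 1. -/
open scoped ComplexOrder

/-- Rank-one structure of the optimal semidefinite solution: if
`Y = M − c·a·aᴴ` with `M` Hermitian positive definite and `c > 0`, and `X`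
is Hermitian positive semidefinite with `X ≠ 0` and `Y·X = 0`, then
`X = c·M⁻¹·a·aᴴ·X` and `rank X = 1`. -/
theorem stmt_9 (N : ℕ) (hN : 1 ≤ N) (M : Matrix (Fin N) (Fin N) ℂ)
    (hM : M.PosDef) (a : Fin N → ℂ) (c : ℝ) (hc : 0 < c)
    (Y : Matrix (Fin N) (Fin N) ℂ)
    (hY : Y = M - (c : ℂ) • Matrix.vecMulVec a (star a))
    (X : Matrix (Fin N) (Fin N) ℂ) (hX : X.PosSemidef) (hX0 : X ≠ 0)
    (hYX : Y * X = 0) :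
    X = (c : ℂ) • (M⁻¹ * Matrix.vecMulVec a (star a) * X) ∧ X.rank = 1 := by
  have hdet : IsUnit M.det := Matrix.isUnit_iff_isUnit_det _ |>.1 hM.isUnit
  have hMX : M * X = (c : ℂ) • (Matrix.vecMulVec a (star a) * X) := by
    rw [hY, sub_mul, sub_eq_zero, Matrix.smul_mul] at hYX
    exact hYX
  have h1 : X = (c : ℂ) • (M⁻¹ * Matrix.vecMulVec a (star a) * X) := by
    calc X = M⁻¹ * (M * X) := by
            rw [← Matrix.mul_assoc, Matrix.nonsing_inv_mul _ hdet, Matrix.one_mul]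
      _ = (c : ℂ) • (M⁻¹ * Matrix.vecMulVec a (star a) * X) := by
            rw [hMX, Matrix.mul_smul, Matrix.mul_assoc]
  refine ⟨h1, ?_⟩
  have hle : X.rank ≤ 1 := by
    have hc0 : (c : ℂ) ≠ 0 := by exact_mod_cast hc.ne'
    calc X.rank = ((c : ℂ) • (M⁻¹ * Matrix.vecMulVec a (star a) * X)).rank := by rw [← h1]
      _ ≤ (Matrix.vecMulVec a (star a)).rank := by
            rw [← Matrix.mul_smul]
            exact le_trans (Matrix.rank_mul_le_left _ ((c:ℂ) • X))
              (Matrix.rank_mul_le_right M⁻¹ _)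
      _ ≤ 1 := by
            rw [Matrix.vecMulVec_eq Unit]
            exact le_trans (Matrix.rank_mul_le_left _ _)
              (le_trans (Matrix.rank_le_card_width _) (by simp))
  have hge : X.rank ≠ 0 := by
    intro h0
    apply hX0
    have : LinearMap.range X.mulVecLin = ⊥ := by
      rw [Matrix.rank] at h0
      exact Submodule.finrank_eq_zero.mp h0
    ext i j
    have := LinearMap.range_eq_bot.mp this
    have h2 := congrFun (congrFun (congrArg DFunLike.coe this) (Pi.single j 1)) i
    simpa [Matrix.mulVecLin, Matrix.mulVec_single] using h2
  omega
end

section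
/- Let η > 0, γ > 0, σ_c² > 0 and c > 0 be real constants, and define f : (0, 1) → ℝ by f(α) = η·σ_c²/(1 − α) + γ·c/α + γ·σ_c²/(α·(1 − α)). Let α* = 1/(1 + √((η + γ)·σ_c²/(γ·(c + σ_c²)))). Then α* ∈ (0, 1) and f attains its minimum over (0, 1) at α*, i.e., f(α*) ≤ f(α) for all α ∈ (0, 1). -/
/-- The optimal power-splitting ratio of the distributed DPS algorithm. -/
theorem stmt_14 (η γ σc2 c : ℝ) (hη : 0 < η) (hγ : 0 < γ) (hσ : 0 < σc2)
    (hc : 0 < c) (f : ℝ → ℝ)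
    (hf : ∀ α ∈ Set.Ioo (0 : ℝ) 1,
      f α = η * σc2 / (1 - α) + γ * c / α + γ * σc2 / (α * (1 - α)))
    (αstar : ℝ)
    (hαstar : αstar = 1 / (1 + Real.sqrt ((η + γ) * σc2 / (γ * (c + σc2))))) :
    αstar ∈ Set.Ioo (0 : ℝ) 1 ∧ ∀ α ∈ Set.Ioo (0 : ℝ) 1, f αstar ≤ f α := by
  set A := (η + γ) * σc2 with hA
  set B := γ * (c + σc2) with hB
  have hApos : 0 < A := by positivity
  have hBpos : 0 < B := by positivity
  set sA := Real.sqrt A with hsAdef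
  set sB := Real.sqrt B with hsBdef
  have hsA : 0 < sA := Real.sqrt_pos.mpr hApos
  have hsB : 0 < sB := Real.sqrt_pos.mpr hBpos
  have hsA2 : sA ^ 2 = A := Real.sq_sqrt hApos.le
  have hsB2 : sB ^ 2 = B := Real.sq_sqrt hBpos.le
  have hdiv : Real.sqrt (A / B) = sA / sB := Real.sqrt_div hApos.le B
  have hα' : αstar = sB / (sA + sB) := by
    rw [hαstar, hdiv, div_eq_div_iff (by positivity) (by positivity)]
    field_simp
    ring
  have hmem : αstar ∈ Set.Ioo (0 : ℝ) 1 := by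
    constructor
    · rw [hα']; positivity
    · rw [hα', div_lt_one (by positivity)]; linarith
  have h1α : 1 - αstar = sA / (sA + sB) := by
    rw [hα']; field_simp; ring
  have hfα : ∀ α ∈ Set.Ioo (0 : ℝ) 1, f α = A / (1 - α) + B / α := by
    intro α hα
    have h0 : α ≠ 0 := ne_of_gt hα.1
    have h1 : (1 : ℝ) - α ≠ 0 := by have := hα.2; intro h; linarith
    rw [hf α hα, hA, hB]
    field_simp
    ring
  have hval : f αstar = (sA + sB) ^ 2 := by
    rw [hfα αstar hmem, h1α, hα']
    rw [div_div_eq_mul_div, div_div_eq_mul_div, div_add_div _ _ (ne_of_gt hsA) (ne_of_gt hsB),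
      div_eq_iff (by positivity)]
    nlinarith [hsA2, hsB2]
  refine ⟨hmem, ?_⟩
  intro α hα
  rw [hval, hfα α hα]
  have h0 : 0 < α := hα.1
  have h1 : 0 < 1 - α := by have := hα.2; linarith
  rw [div_add_div _ _ (ne_of_gt h1) (ne_of_gt h0), le_div_iff₀ (by positivity)]
  nlinarith [sq_nonneg (sA * α - sB * (1 - α)), hsA2, hsB2]
end
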